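/- For h ≥ 0, let P_h(x,y) be the generating function of Motzkin path prefixes with no peaks or valleys ending at height h, with x marking H steps and y marking U steps, and let M(x,y) = P_0(x,y). Then for all h ≥ 1, P_h·(1 − x − xy(M−1)) = y·P_{h−1}, and consequently P_h = y^h M / (1 − x − xy(M−1))^h as formal power series. -/

import Mathlib

/-- Steps of bargraphs / Motzkin paths. -/
inductive Step where
  | U : Step
  | H : Step
  | D : Step
deriving DecidableEq

/-- Vertical displacement of a step. -/
def Step.val : Step → ℤ
  | .U => 1
  | .H => 0
  | .D => -1

/-- Mirror of a step (swap U and D). -/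
def Step.mirror : Step → Step
  | .U => .D
  | .H => .H
  | .D => .U

/-- Final height of a word. -/
def hgt (w : List Step) : ℤ := (w.map Step.val).sum

/-- A Motzkin path prefix: never goes below the x-axis. -/
def IsMotzkinPrefix (w : List Step) : Prop := ∀ p : List Step, p <+: w → 0 ≤ hgt p

/-- A Motzkin path: never below the x-axis, ends at height 0. -/
def IsMotzkin (w : List Step) : Prop := IsMotzkinPrefix w ∧ hgt w = 0

/-- No peak `UD` and no valley `DU`. -/
def Cornerless (w : List Step) : Prop :=
  ¬ [Step.U, Step.D] <:+: w ∧ ¬ [Step.D, Step.U] <:+: w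

/-- A bargraph: starts at the origin, ends on the x-axis, stays strictly above the
x-axis except at the endpoints, and has no factor `UD` or `DU`. -/
def IsBargraph (w : List Step) : Prop :=
  2 ≤ w.length ∧ hgt w = 0 ∧
    (∀ p : List Step, p <+: w → p ≠ [] → p ≠ w → 0 < hgt p) ∧ Cornerless w

/-- Semiperimeter: number of `U` steps plus number of `H` steps. -/
def semi (w : List Step) : ℕ := w.count Step.U + w.count Step.H

/-- Length of the initial run of `U` steps. -/
def leadU : List Step → ℕ
  | Step.U :: rest => leadU rest + 1
  | _ => 0

/-- Length of the initial run of `H` steps. -/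
def leadH : List Step → ℕ
  | Step.H :: rest => leadH rest + 1
  | _ => 0

/-- Length of the initial run of `D` steps. -/
def leadD : List Step → ℕ
  | Step.D :: rest => leadD rest + 1
  | _ => 0

/-- Length of the first maximal run of `D` steps (0 if none). -/
def firstDescLen : List Step → ℕ
  | [] => 0
  | Step.D :: rest => leadD rest + 1
  | _ :: rest => firstDescLen rest

/-- Number of occurrences of the two-letter factor `a b`. -/
def cnt2 (a b : Step) : List Step → ℕ
  | x :: y :: rest => (if x = a ∧ y = b then 1 else 0) + cnt2 a b (y :: rest)
  | _ => 0

/-- Heights of the columns (`H` steps), starting from a given height. -/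
def colHeights : ℤ → List Step → List ℤ
  | _, [] => []
  | h, Step.U :: rest => colHeights (h + 1) rest
  | h, Step.H :: rest => h :: colHeights h rest
  | h, Step.D :: rest => colHeights (h - 1) rest

/-- Width of the leftmost maximal horizontal segment (0 if none). -/
def lhsW : List Step → ℕ
  | [] => 0
  | Step.H :: rest => leadH rest + 1
  | _ :: rest => lhsW rest

/-- Delete `h` steps at the start of the leftmost horizontal segment. -/
def stripLeadH (h : ℕ) : List Step → List Step
  | [] => []
  | Step.H :: rest => List.drop h (Step.H :: rest)
  | s :: rest => s :: stripLeadH h rest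

/-- Number of initial columns of height 1: largest `j` such that the word begins `U H^j`. -/
def iuc : List Step → ℕ
  | Step.U :: rest => leadH rest
  | _ => 0

/-- Number of maximal horizontal segments. -/
def hsCount : List Step → ℕ
  | [] => 0
  | [Step.H] => 1
  | [_] => 0
  | a :: b :: rest => (if a = Step.H ∧ b ≠ Step.H then 1 else 0) + hsCount (b :: rest)

/-- Mirror image: reverse the word and swap `U` with `D`. -/
def mir (w : List Step) : List Step := (w.reverse).map Step.mirror

/-- Shape of strictly alternating bargraphs:
`U^{i₁} H D^{k₁} H U^{i₂} H D^{k₂} H ⋯ U^{iₘ} H D^{kₘ}` with all `iᵣ, kᵣ ≥ 1`. -/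
inductive SAShape : List Step → Prop where
  | base (i k : ℕ) : 1 ≤ i → 1 ≤ k →
      SAShape (List.replicate i Step.U ++ [Step.H] ++ List.replicate k Step.D)
  | cons (i k : ℕ) (w : List Step) : 1 ≤ i → 1 ≤ k → SAShape w →
      SAShape (List.replicate i Step.U ++ [Step.H] ++ List.replicate k Step.D ++ [Step.H] ++ w)

/-- A strictly alternating bargraph. -/
def IsStrictAlt (w : List Step) : Prop := IsBargraph w ∧ SAShape w

/-- A secondary structure on `{0, …, m-1}`: all consecutive edges are present, every
vertex has at most one non-consecutive neighbour, and there are no crossing edges. -/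
def IsSecondaryStructure {m : ℕ} (G : SimpleGraph (Fin m)) : Prop :=
  (∀ i j : Fin m, (i : ℕ) + 1 = (j : ℕ) → G.Adj i j) ∧
  (∀ i j k : Fin m, G.Adj i j → G.Adj i k →
      (i : ℕ) + 1 ≠ (j : ℕ) → (j : ℕ) + 1 ≠ (i : ℕ) →
      (i : ℕ) + 1 ≠ (k : ℕ) → (k : ℕ) + 1 ≠ (i : ℕ) → j = k) ∧
  ¬ ∃ i j k l : Fin m, (i : ℕ) < (j : ℕ) ∧ (j : ℕ) < (k : ℕ) ∧ (k : ℕ) < (l : ℕ) ∧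
      G.Adj i k ∧ G.Adj j l

/-- Generating function of bargraphs: `x` (variable 0) marks `H` steps,
`y` (variable 1) marks `U` steps. -/
noncomputable def BG : MvPowerSeries (Fin 2) ℚ :=
  fun d => (Nat.card {w : List Step //
    IsBargraph w ∧ w.count Step.H = d 0 ∧ w.count Step.U = d 1} : ℚ)

/-- Generating function of cornerless Motzkin paths. -/
noncomputable def MG : MvPowerSeries (Fin 2) ℚ :=
  fun d => (Nat.card {w : List Step //
    IsMotzkin w ∧ Cornerless w ∧ w.count Step.H = d 0 ∧ w.count Step.U = d 1} : ℚ)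

/-- Generating function of bargraphs avoiding the factor `DH`. -/
noncomputable def BDH : MvPowerSeries (Fin 2) ℚ :=
  fun d => (Nat.card {w : List Step //
    IsBargraph w ∧ ¬ [Step.D, Step.H] <:+: w ∧
      w.count Step.H = d 0 ∧ w.count Step.U = d 1} : ℚ)

/-- Generating function of bargraphs avoiding the factors `DH` and `HH`. -/
noncomputable def BDHHH : MvPowerSeries (Fin 2) ℚ :=
  fun d => (Nat.card {w : List Step //
    IsBargraph w ∧ ¬ [Step.D, Step.H] <:+: w ∧ ¬ [Step.H, Step.H] <:+: w ∧
      w.count Step.H = d 0 ∧ w.count Step.U = d 1} : ℚ)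

/-- Generating function of cornerless Motzkin path prefixes ending at height `h`. -/
noncomputable def Pgf (h : ℕ) : MvPowerSeries (Fin 2) ℚ :=
  fun d => (Nat.card {w : List Step //
    IsMotzkinPrefix w ∧ Cornerless w ∧ hgt w = (h : ℤ) ∧
      w.count Step.H = d 0 ∧ w.count Step.U = d 1} : ℚ)

/-- Decomposition `G = U^a G₁ H G₂ D^a` of a strictly alternating bargraph. -/
def SADecomp (t : ℕ × List Step × List Step) (G : List Step) : Prop :=
  1 ≤ t.1 ∧ IsStrictAlt t.2.1 ∧ IsStrictAlt (Step.U :: (t.2.2 ++ [Step.D])) ∧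
    G = List.replicate t.1 Step.U ++ t.2.1 ++ [Step.H] ++ t.2.2 ++
      List.replicate t.1 Step.D

namespace PGFAux

instance : Fintype Step where
  elems := {Step.U, Step.H, Step.D}
  complete := fun x => by cases x <;> simp

open Step List

/-- ends with letter s -/
def EW (s : Step) (w : List Step) : Prop := ∃ u, w = u ++ [s]

lemma hgt_nil : hgt [] = 0 := rfl

lemma hgt_append (u v : List Step) : hgt (u ++ v) = hgt u + hgt v := by
  simp [hgt]

lemma hgt_cons (s : Step) (w : List Step) : hgt (s :: w) = s.val + hgt w := by
  simp [hgt]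

lemma hgt_singleton (s : Step) : hgt [s] = s.val := by simp [hgt]

lemma length_eq_counts (w : List Step) :
    w.length = w.count .U + w.count .H + w.count .D := by
  induction w with
  | nil => rfl
  | cons s t ih =>
    cases s <;> simp [List.count_cons, ih] <;> omega

lemma hgt_eq_counts (w : List Step) :
    hgt w = (w.count .U : ℤ) - (w.count .D : ℤ) := by
  induction w with
  | nil => rfl
  | cons s t ih =>
    cases s <;> simp [hgt_cons, List.count_cons, ih, Step.val] <;> ring

lemma EW_iff_getLast? {s : Step} {w : List Step} : EW s w ↔ w.getLast? = some s := by
  constructor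
  · rintro ⟨u, rfl⟩; simp
  · intro h
    rcases w.eq_nil_or_concat with rfl | ⟨L, b, rfl⟩
    · simp at h
    · simp only [List.concat_eq_append, List.getLast?_append, List.getLast?_singleton] at h ⊢
      exact ⟨L, by simp_all⟩

lemma EW_unique {a b : Step} {w : List Step} (ha : EW a w) (hb : EW b w) : a = b := by
  rw [EW_iff_getLast?] at ha hb; rw [ha] at hb; exact Option.some_inj.mp hb

lemma ew_trichotomy {w : List Step} (h : w ≠ []) : EW .U w ∨ EW .H w ∨ EW .D w := by
  rcases w.eq_nil_or_concat with rfl | ⟨L, b, rfl⟩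
  · exact absurd rfl h
  · cases b
    · exact Or.inl ⟨L, by simp⟩
    · exact Or.inr (Or.inl ⟨L, by simp⟩)
    · exact Or.inr (Or.inr ⟨L, by simp⟩)

lemma not_EW_nil (s : Step) : ¬ EW s [] := by
  rintro ⟨u, h⟩; simp at h

end PGFAux

namespace PGFAux
open Step List

lemma pair_infix_nil {a b : Step} : ¬ [a,b] <:+: ([] : List Step) := by
  intro h; simpa using List.infix_nil.mp h

lemma pair_infix_cons {a b x : Step} {l : List Step} :
    [a,b] <:+: (x :: l) ↔ [a,b] <:+: l ∨ (x = a ∧ l.head? = some b) := by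
  constructor
  · rintro ⟨s, t, hst⟩
    cases s with
    | nil =>
      simp only [List.nil_append, List.cons_append] at hst
      injection hst with h1 h2
      subst h1
      exact Or.inr ⟨rfl, by rw [← h2]; rfl⟩
    | cons y s' =>
      simp only [List.cons_append] at hst
      injection hst with h1 h2
      exact Or.inl ⟨s', t, h2⟩
  · rintro (⟨s, t, rfl⟩ | ⟨rfl, hb⟩)
    · exact ⟨x :: s, t, by simp⟩
    · rcases l with _ | ⟨y, l'⟩
      · simp at hb
      · injection hb with hb; subst hb
        exact ⟨[], l', by simp⟩

lemma pair_infix_append {a b : Step} (u v : List Step) :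
    [a,b] <:+: (u ++ v) ↔
      [a,b] <:+: u ∨ [a,b] <:+: v ∨ (u.getLast? = some a ∧ v.head? = some b) := by
  induction u with
  | nil =>
    simp only [List.nil_append, List.getLast?_nil]
    constructor
    · exact fun h => Or.inr (Or.inl h)
    · rintro (h | h | ⟨h, -⟩)
      · exact absurd h pair_infix_nil
      · exact h
      · exact absurd h (by simp)
  | cons x u' ih =>
    rw [List.cons_append, pair_infix_cons, ih, pair_infix_cons]
    cases u' with
    | nil =>
      constructor
      · rintro ((h | h | ⟨h, -⟩) | ⟨rfl, hb⟩)
        · exact absurd h pair_infix_nil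
        · exact Or.inr (Or.inl h)
        · exact absurd h (by simp)
        · exact Or.inr (Or.inr ⟨by simp, by simpa using hb⟩)
      · rintro ((h | ⟨rfl, hb⟩) | h | ⟨ha, hb⟩)
        · exact absurd h pair_infix_nil
        · exact absurd hb (by simp)
        · exact Or.inl (Or.inr (Or.inl h))
        · exact Or.inr ⟨by simpa using ha, by simpa using hb⟩
    | cons y u'' =>
      simp only [List.cons_append, List.head?_cons, List.getLast?_cons_cons,
        Option.some_inj]
      tauto

lemma cornerless_mono {v w : List Step} (h : v <:+: w) (hc : Cornerless w) : Cornerless v :=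
  ⟨fun hi => hc.1 (hi.trans h), fun hi => hc.2 (hi.trans h)⟩

lemma cornerless_nil : Cornerless [] := ⟨pair_infix_nil, pair_infix_nil⟩

end PGFAux

namespace PGFAux
open Step List

lemma pair_infix_singleton {a b c : Step} : ¬ [a,b] <:+: [c] := by
  rw [pair_infix_cons]
  rintro (h | ⟨-, h⟩)
  · exact pair_infix_nil h
  · simp at h

lemma cornerless_concat_H {w : List Step} :
    Cornerless (w ++ [Step.H]) ↔ Cornerless w := by
  unfold Cornerless
  rw [pair_infix_append, pair_infix_append]
  simp [pair_infix_singleton]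

lemma cornerless_concat_U {w : List Step} :
    Cornerless (w ++ [Step.U]) ↔ Cornerless w ∧ ¬ EW .D w := by
  unfold Cornerless
  rw [pair_infix_append, pair_infix_append, EW_iff_getLast?]
  simp [pair_infix_singleton]
  tauto

lemma head?_append_of_ne_nil {m : List Step} (v : List Step) (hm : m ≠ []) :
    (m ++ v).head? = m.head? := by
  cases m with
  | nil => exact absurd rfl hm
  | cons x t => simp

lemma cornerless_block {u m : List Step} (hm : m ≠ [])
    (hmhd : m.head? ≠ some Step.D) (hml : m.getLast? ≠ some Step.U) :
    Cornerless (u ++ (Step.U :: (m ++ [Step.D]))) ↔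
      Cornerless u ∧ Cornerless m ∧ u.getLast? ≠ some Step.D := by
  unfold Cornerless
  rw [pair_infix_append, pair_infix_append, pair_infix_cons, pair_infix_cons,
    pair_infix_append, pair_infix_append, head?_append_of_ne_nil _ hm]
  simp [pair_infix_singleton]
  tauto

lemma motzkinPrefix_nonneg {w : List Step} (h : IsMotzkinPrefix w) : 0 ≤ hgt w :=
  h w (List.prefix_refl w)

lemma motzkinPrefix_append {u v : List Step} :
    IsMotzkinPrefix (u ++ v) ↔
      IsMotzkinPrefix u ∧ ∀ q, q <+: v → 0 ≤ hgt u + hgt q := by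
  constructor
  · intro h
    refine ⟨fun p hp => h p (hp.trans (u.prefix_append v)), fun q hq => ?_⟩
    have := h (u ++ q) ((List.prefix_append_right_inj u).mpr hq)
    rwa [hgt_append] at this
  · rintro ⟨h1, h2⟩ p hp
    rcases List.prefix_or_prefix_of_prefix hp (u.prefix_append v) with h | h
    · exact h1 p h
    · obtain ⟨q, rfl⟩ := h
      have hq : q <+: v := (List.prefix_append_right_inj u).mp hp
      rw [hgt_append]
      exact h2 q hq

lemma motzkinPrefix_mono {u w : List Step} (h : u <+: w) (hw : IsMotzkinPrefix w) :
    IsMotzkinPrefix u := fun p hp => hw p (hp.trans h)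

lemma motzkin_head?_ne_D {m : List Step} (hm : IsMotzkinPrefix m) :
    m.head? ≠ some Step.D := by
  cases m with
  | nil => simp
  | cons x t =>
    rw [List.head?_cons]
    intro h
    injection h with h
    subst h
    have := hm [Step.D] ⟨t, rfl⟩
    simp [hgt, Step.val] at this

lemma motzkin_getLast?_ne_U {m : List Step} (hm : IsMotzkinPrefix m) (h0 : hgt m = 0) :
    m.getLast? ≠ some Step.U := by
  intro h
  obtain ⟨u, rfl⟩ := EW_iff_getLast?.mpr h
  have hu := hm u (u.prefix_append _)
  rw [hgt_append, hgt_singleton] at h0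
  simp [Step.val] at h0
  omega

end PGFAux

namespace PGFAux
open Step List MvPowerSeries

/-- The bidegree of a word: variable 0 counts `H`s, variable 1 counts `U`s. -/
noncomputable def cts (w : List Step) : Fin 2 →₀ ℕ :=
  Finsupp.single 0 (w.count Step.H) + Finsupp.single 1 (w.count Step.U)

lemma cts_apply0 (w : List Step) : cts w 0 = w.count Step.H := by
  simp [cts, Finsupp.single_apply]

lemma cts_apply1 (w : List Step) : cts w 1 = w.count Step.U := by
  simp [cts, Finsupp.single_apply]

lemma cts_eq_iff {w : List Step} {d : Fin 2 →₀ ℕ} :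
    cts w = d ↔ (w.count Step.H = d 0 ∧ w.count Step.U = d 1) := by
  constructor
  · rintro rfl; exact ⟨(cts_apply0 w).symm, (cts_apply1 w).symm⟩
  · rintro ⟨h0, h1⟩
    apply Finsupp.ext
    rw [Fin.forall_fin_two]
    exact ⟨by rw [cts_apply0]; exact h0, by rw [cts_apply1]; exact h1⟩

lemma cts_append (u v : List Step) : cts (u ++ v) = cts u + cts v := by
  apply Finsupp.ext
  rw [Fin.forall_fin_two]
  constructor
  · rw [Finsupp.add_apply, cts_apply0, cts_apply0, cts_apply0, List.count_append]
  · rw [Finsupp.add_apply, cts_apply1, cts_apply1, cts_apply1, List.count_append]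

lemma cts_nil : cts [] = 0 := by simp [cts]

lemma cts_eq_zero_iff {w : List Step} (hD : w.count Step.D ≤ w.count Step.U) :
    cts w = 0 → w = [] := by
  intro h
  have h0 := congrArg (fun f => f 0) h
  have h1 := congrArg (fun f => f 1) h
  simp only [cts_apply0, cts_apply1, Finsupp.coe_zero, Pi.zero_apply] at h0 h1
  have := length_eq_counts w
  have : w.length = 0 := by omega
  exact List.length_eq_zero_iff.mp this

/-- generating function of a set of words, by bidegree -/
noncomputable def gf (S : List Step → Prop) : MvPowerSeries (Fin 2) ℚ :=
  fun d => (Nat.card {w : List Step // S w ∧ cts w = d} : ℚ)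

lemma coeff_gf (S : List Step → Prop) (d : Fin 2 →₀ ℕ) :
    MvPowerSeries.coeff d (gf S) = (Nat.card {w : List Step // S w ∧ cts w = d} : ℚ) :=
  rfl

lemma slice_finite (S : List Step → Prop) (c : ℕ)
    (hS : ∀ w, S w → w.count Step.D ≤ w.count Step.U + c) (d : Fin 2 →₀ ℕ) :
    Finite {w : List Step // S w ∧ cts w = d} := by
  have hsub : {w : List Step | S w ∧ cts w = d} ⊆
      {l : List Step | l.length ≤ d 0 + 2 * d 1 + c} := by
    rintro w ⟨hw, hc⟩
    have h0 : w.count Step.H = d 0 := (cts_eq_iff.mp hc).1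
    have h1 : w.count Step.U = d 1 := (cts_eq_iff.mp hc).2
    have := length_eq_counts w
    have := hS w hw
    simp only [Set.mem_setOf_eq]
    omega
  exact ((List.finite_length_le Step (d 0 + 2 * d 1 + c)).subset hsub)

lemma gf_congr {S T : List Step → Prop} (h : ∀ w, S w ↔ T w) : gf S = gf T := by
  unfold gf
  funext d
  congr 1
  exact Nat.card_congr (Equiv.subtypeEquivRight (fun w => by rw [h w]))

lemma gf_add {S T W : List Step → Prop}
    (hW : ∀ w, W w ↔ S w ∨ T w) (hdisj : ∀ w, S w → T w → False)
    (hfinS : ∀ d, Finite {w : List Step // S w ∧ cts w = d})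
    (hfinT : ∀ d, Finite {w : List Step // T w ∧ cts w = d}) :
    gf W = gf S + gf T := by
  ext d
  rw [map_add, coeff_gf, coeff_gf, coeff_gf]
  classical
  have e1 : {w : List Step // W w ∧ cts w = d} ≃
      {w : List Step // (S w ∧ cts w = d) ∨ (T w ∧ cts w = d)} :=
    Equiv.subtypeEquivRight (fun w => by rw [hW w]; tauto)
  have e2 : {w : List Step // (S w ∧ cts w = d) ∨ (T w ∧ cts w = d)} ≃
      {w : List Step // S w ∧ cts w = d} ⊕ {w : List Step // T w ∧ cts w = d} :=
    subtypeOrEquiv _ _ (by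
      rw [Pi.disjoint_iff]
      intro w
      rw [Prop.disjoint_iff]
      rintro ⟨⟨hs, -⟩, ⟨ht, -⟩⟩
      exact hdisj w hs ht)
  haveI := hfinS d; haveI := hfinT d
  rw [Nat.card_congr (e1.trans e2), Nat.card_sum]
  push_cast
  ring

lemma nat_card_sigma {ι : Type*} [Fintype ι] (f : ι → Type*) [∀ i, Finite (f i)] :
    Nat.card (Σ i, f i) = ∑ i, Nat.card (f i) := by
  letI : ∀ i, Fintype (f i) := fun i => Fintype.ofFinite (f i)
  simp [Nat.card_eq_fintype_card, Fintype.card_sigma]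

lemma gf_mul {S T W : List Step → Prop}
    (hfinS : ∀ d, Finite {w : List Step // S w ∧ cts w = d})
    (hfinT : ∀ d, Finite {w : List Step // T w ∧ cts w = d})
    (hex : ∀ w, W w ↔ ∃ u v, S u ∧ T v ∧ w = u ++ v)
    (huniq : ∀ u v u' v', S u → T v → S u' → T v' → u ++ v = u' ++ v' →
      u = u' ∧ v = v') :
    gf W = gf S * gf T := by
  ext d
  classical
  rw [MvPowerSeries.coeff_mul, coeff_gf]
  have key :
      Nat.card {w : List Step // W w ∧ cts w = d} =
      ∑ p ∈ Finset.HasAntidiagonal.antidiagonal d,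
        Nat.card {u : List Step // S u ∧ cts u = p.1} *
          Nat.card {v : List Step // T v ∧ cts v = p.2} := by
    let g : (Σ p : {x // x ∈ Finset.HasAntidiagonal.antidiagonal d},
        ({u : List Step // S u ∧ cts u = p.1.1} × {v : List Step // T v ∧ cts v = p.1.2})) →
        {w : List Step // W w ∧ cts w = d} :=
      fun x => ⟨x.2.1.1 ++ x.2.2.1,
        (hex _).mpr ⟨_, _, x.2.1.2.1, x.2.2.2.1, rfl⟩,
        by rw [cts_append, x.2.1.2.2, x.2.2.2.2]
           exact Finset.HasAntidiagonal.mem_antidiagonal.mp x.1.2⟩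
    have hbij : Function.Bijective g := by
      constructor
      · rintro ⟨⟨p, hp⟩, ⟨u, hu⟩, ⟨v, hv⟩⟩ ⟨⟨q, hq⟩, ⟨u', hu'⟩, ⟨v', hv'⟩⟩ hgg
        have heq : u ++ v = u' ++ v' := congrArg Subtype.val hgg
        obtain ⟨rfl, rfl⟩ := huniq u v u' v' hu.1 hv.1 hu'.1 hv'.1 heq
        have hp1 : p = q := Prod.ext (by rw [← hu.2, ← hu'.2]) (by rw [← hv.2, ← hv'.2])
        subst hp1
        rfl
      · rintro ⟨w, hw, hcts⟩
        obtain ⟨u, v, hu, hv, rfl⟩ := (hex w).mp hw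
        have hmem : (cts u, cts v) ∈ Finset.HasAntidiagonal.antidiagonal d := by
          rw [Finset.HasAntidiagonal.mem_antidiagonal, ← cts_append]
          exact hcts
        exact ⟨⟨⟨(cts u, cts v), hmem⟩, ⟨u, hu, rfl⟩, ⟨v, hv, rfl⟩⟩, rfl⟩
    haveI : ∀ p : {x // x ∈ Finset.HasAntidiagonal.antidiagonal d},
        Finite ({u : List Step // S u ∧ cts u = p.1.1} ×
          {v : List Step // T v ∧ cts v = p.1.2}) := by
      rintro ⟨p, hp⟩
      haveI := hfinS p.1
      haveI := hfinT p.2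
      exact inferInstance
    rw [← Nat.card_congr (Equiv.ofBijective g hbij), nat_card_sigma]
    rw [← Finset.sum_coe_sort (Finset.HasAntidiagonal.antidiagonal d)
      (fun p => Nat.card {u : List Step // S u ∧ cts u = p.1} *
        Nat.card {v : List Step // T v ∧ cts v = p.2})]
    congr 1
    funext p
    rw [Nat.card_prod]
  rw [key]
  push_cast
  rfl

end PGFAux

namespace PGFAux
open Step List

lemma hgt_optionToList (o : Option Step) : -1 ≤ hgt o.toList ∧ hgt o.toList ≤ 1 := by
  rcases o with _ | s
  · simp [hgt]
  · rcases s <;> simp [hgt, Step.val]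

lemma hgt_take_succ_bounds (w : List Step) (i : ℕ) :
    hgt (w.take i) - 1 ≤ hgt (w.take (i+1)) ∧
      hgt (w.take (i+1)) ≤ hgt (w.take i) + 1 := by
  rw [List.take_succ, hgt_append]
  have := hgt_optionToList w[i]?
  omega

lemma ivt_aux (w : List Step) (t : ℤ) :
    ∀ n i j : ℕ, j = i + n → j ≤ w.length →
      hgt (w.take i) ≤ t → t ≤ hgt (w.take j) →
      ∃ k, i ≤ k ∧ k ≤ j ∧ hgt (w.take k) = t := by
  intro n
  induction n with
  | zero =>
    intro i j hj _ h1 h2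
    subst hj
    exact ⟨j, by omega, le_refl j, by omega⟩
  | succ n ih =>
    intro i j hj hjl h1 h2
    by_cases hi : hgt (w.take i) = t
    · exact ⟨i, le_refl i, by omega, hi⟩
    · have hb := hgt_take_succ_bounds w i
      obtain ⟨k, hk1, hk2, hk3⟩ := ih (i+1) j (by omega) hjl (by omega) h2
      exact ⟨k, by omega, hk2, hk3⟩

lemma ivt (w : List Step) (t : ℤ) (i j : ℕ) (hij : i ≤ j) (hj : j ≤ w.length)
    (h1 : hgt (w.take i) ≤ t) (h2 : t ≤ hgt (w.take j)) :
    ∃ k, i ≤ k ∧ k ≤ j ∧ hgt (w.take k) = t :=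
  ivt_aux w t (j - i) i j (by omega) hj h1 h2

/-- nonempty cornerless Motzkin path -/
def pM (m : List Step) : Prop := IsMotzkin m ∧ Cornerless m ∧ m ≠ []

/-- cornerless prefix ending at height h -/
def pP (h : ℕ) (w : List Step) : Prop :=
  IsMotzkinPrefix w ∧ Cornerless w ∧ hgt w = (h : ℤ)

def pA (h : ℕ) (w : List Step) : Prop := pP h w ∧ ¬ EW Step.D w

lemma exists_decomp {h : ℕ} {w : List Step}
    (hw : IsMotzkinPrefix w) (hc : Cornerless w) (hh : hgt w = (h : ℤ))
    (hD : EW Step.D w) :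
    ∃ u m, pA h u ∧ pM m ∧ w = u ++ (Step.U :: (m ++ [Step.D])) := by
  obtain ⟨w₀, rfl⟩ := hD
  have hw₀ : hgt w₀ = (h : ℤ) + 1 := by
    rw [hgt_append, hgt_singleton] at hh
    simp [Step.val] at hh
    omega
  obtain ⟨L, hL⟩ : ∃ L, L = w₀.length := ⟨_, rfl⟩
  have h0 : (0 : ℤ) ≤ (h : ℤ) := Int.ofNat_nonneg h
  have htL : w₀.take L = w₀ := by rw [hL]; exact List.take_length
  have hKne : (Finset.filter (fun k => hgt (w₀.take k) = (h : ℤ))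
      (Finset.range (L+1))).Nonempty := by
    obtain ⟨k, hk1, hk2, hk3⟩ := ivt w₀ (h : ℤ) 0 L (by omega) (by omega)
      (by simp [hgt]) (by rw [htL]; omega)
    exact ⟨k, Finset.mem_filter.mpr ⟨Finset.mem_range.mpr (by omega), hk3⟩⟩
  obtain ⟨n, hn⟩ : ∃ n, n = Finset.max' _ hKne := ⟨_, rfl⟩
  have hnK : n ∈ Finset.filter (fun k => hgt (w₀.take k) = (h : ℤ))
      (Finset.range (L+1)) := by rw [hn]; exact Finset.max'_mem _ hKne
  have hnL : n ≤ L := by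
    have := (Finset.mem_filter.mp hnK).1
    rw [Finset.mem_range] at this; omega
  have hnh : hgt (w₀.take n) = (h : ℤ) := (Finset.mem_filter.mp hnK).2
  have hmax : ∀ k, k ≤ L → hgt (w₀.take k) = (h : ℤ) → k ≤ n := by
    intro k hk1 hk2
    rw [hn]
    exact Finset.le_max' _ k (Finset.mem_filter.mpr ⟨Finset.mem_range.mpr (by omega), hk2⟩)
  have hnltL : n < L := by
    have hne : n ≠ L := by
      intro he
      rw [he, htL] at hnh
      omega
    omega
  have hA : ∀ k, n < k → k ≤ L → (h : ℤ) + 1 ≤ hgt (w₀.take k) := by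
    intro k hk1 hk2
    by_contra hcon
    push_neg at hcon
    have hne' : hgt (w₀.take k) ≠ (h : ℤ) := fun hk => by
      have := hmax k hk2 hk; omega
    obtain ⟨k', hk'1, hk'2, hk'3⟩ := ivt w₀ (h : ℤ) k L (by omega) (by omega)
      (by omega) (by rw [htL]; omega)
    have := hmax k' hk'2 hk'3
    omega
  have hnltlen : n < w₀.length := by omega
  have hgetn : w₀[n]? = some w₀[n] := List.getElem?_eq_getElem hnltlen
  have htaken1 : w₀.take (n+1) = w₀.take n ++ [w₀[n]] := by
    rw [List.take_succ, hgetn]; rfl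
  have hstep : hgt (w₀.take (n+1)) = hgt (w₀.take n) + (w₀[n]).val := by
    rw [htaken1, hgt_append, hgt_singleton]
  have hU : w₀[n] = Step.U := by
    have := hA (n+1) (by omega) (by omega)
    rcases hval : w₀[n] with _ | _ | _
    · rfl
    · rw [hval] at hstep; simp [Step.val] at hstep; omega
    · rw [hval] at hstep; simp [Step.val] at hstep; omega
  have htaken1U : w₀.take (n+1) = w₀.take n ++ [Step.U] := by rw [htaken1, hU]
  obtain ⟨u, hu⟩ : ∃ u, u = w₀.take n := ⟨_, rfl⟩
  obtain ⟨m, hm⟩ : ∃ m, m = w₀.drop (n+1) := ⟨_, rfl⟩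
  have hw₀split : w₀ = u ++ [Step.U] ++ m := by
    rw [hu, hm, ← htaken1U]
    exact (List.take_append_drop (n+1) w₀).symm
  have hwsplit : w₀ ++ [Step.D] = u ++ (Step.U :: (m ++ [Step.D])) := by
    conv_lhs => rw [hw₀split]
    simp
  have hmlen : m.length = L - (n+1) := by rw [hm, List.length_drop]; omega
  have hhu : hgt u = (h : ℤ) := by rw [hu]; exact hnh
  have hhtaken1 : hgt (w₀.take (n+1)) = (h : ℤ) + 1 := by
    rw [hstep, hU, hnh]; rfl
  have hgm : hgt m = 0 := by
    have hws : hgt w₀ = hgt (w₀.take (n+1)) + hgt m := by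
      conv_lhs => rw [← List.take_append_drop (n+1) w₀]
      rw [hgt_append, hm]
    omega
  have hmtake : ∀ j, j ≤ m.length → hgt (m.take j) = hgt (w₀.take (n+1+j)) - ((h:ℤ)+1) := by
    intro j hj
    have hsplit : w₀.take (n+1+j) = w₀.take (n+1) ++ m.take j := by
      rw [List.take_add, hm]
    rw [hsplit, hgt_append, hhtaken1]
    ring
  have hmpre : IsMotzkinPrefix m := by
    intro p hp
    have hplen : p.length ≤ m.length := hp.length_le
    have hptake : p = m.take p.length := List.prefix_iff_eq_take.mp hp
    rw [hptake, hmtake p.length hplen]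
    have := hA (n+1+p.length) (by omega) (by omega)
    omega
  have hmne : m ≠ [] := by
    rintro rfl
    apply hc.1
    rw [hwsplit]
    exact ⟨u, [], by simp⟩
  have hupre : IsMotzkinPrefix u := by
    apply motzkinPrefix_mono _ hw
    rw [hu]
    exact (List.take_prefix n w₀).trans (w₀.prefix_append [Step.D])
  have hucorn : Cornerless u := by
    apply cornerless_mono _ hc
    rw [hu]
    exact ((List.take_prefix n w₀).trans (w₀.prefix_append [Step.D])).isInfix
  have huD : ¬ EW Step.D u := by
    rintro ⟨u', hu'⟩
    apply hc.2
    rw [hwsplit, hu']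
    exact ⟨u', m ++ [Step.D], by simp⟩
  have hmcorn : Cornerless m := by
    apply cornerless_mono _ hc
    rw [hwsplit]
    exact ⟨u ++ [Step.U], [Step.D], by simp⟩
  exact ⟨u, m, ⟨⟨hupre, hucorn, hhu⟩, huD⟩,
    ⟨⟨hmpre, hgm⟩, hmcorn, hmne⟩, hwsplit⟩

lemma decomp_len_aux {h : ℕ} {u m u' m' : List Step}
    (hu : hgt u = (h : ℤ)) (hu' : hgt u' = (h : ℤ))
    (hm : IsMotzkinPrefix m)
    (heq : u ++ (Step.U :: (m ++ [Step.D])) = u' ++ (Step.U :: (m' ++ [Step.D]))) :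
    ¬ u.length < u'.length := by
  intro hlt
  have heq' : (u ++ [Step.U]) ++ (m ++ [Step.D]) = u' ++ (Step.U :: (m' ++ [Step.D])) := by
    rw [← heq]; simp
  have hpre1 : u ++ [Step.U] <+: (u ++ [Step.U]) ++ (m ++ [Step.D]) :=
    (u ++ [Step.U]).prefix_append _
  have hpre2 : u' <+: (u ++ [Step.U]) ++ (m ++ [Step.D]) := by
    rw [heq']; exact u'.prefix_append _
  have hcmp := List.prefix_or_prefix_of_prefix hpre1 hpre2
  have hlen1 : (u ++ [Step.U]).length ≤ u'.length := by
    simp only [List.length_append, List.length_singleton]; omega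
  have hpre3 : u ++ [Step.U] <+: u' := by
    rcases hcmp with hp | hp
    · exact hp
    · have := hp.length_le
      have : u'.length = (u ++ [Step.U]).length := by
        simp only [List.length_append, List.length_singleton] at *; omega
      rw [List.prefix_iff_eq_take.mp hp, this, List.take_length]
  obtain ⟨t, rfl⟩ := hpre3
  have hlenw := congrArg List.length heq
  simp only [List.length_append, List.length_cons, List.length_singleton] at hlenw
  have htm : t.length ≤ m.length := by omega
  have htpre : t <+: m := by
    have h1 : (u ++ [Step.U]) ++ t <+: (u ++ [Step.U]) ++ (m ++ [Step.D]) := by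
      rw [heq']; exact (u ++ [Step.U] ++ t).prefix_append _
    have h2 : t <+: m ++ [Step.D] := (List.prefix_append_right_inj _).mp h1
    have h3 : t = (m ++ [Step.D]).take t.length := List.prefix_iff_eq_take.mp h2
    rw [List.take_append_of_le_length htm] at h3
    conv_lhs => rw [h3]
    exact List.take_prefix _ _
  have hht : 0 ≤ hgt t := hm t htpre
  have : hgt ((u ++ [Step.U]) ++ t) = (h : ℤ) + 1 + hgt t := by
    rw [hgt_append, hgt_append, hgt_singleton, hu]
    simp [Step.val]
    try ring
  rw [hu'] at this
  omega

lemma decomp_uniq {h : ℕ} {u m u' m' : List Step}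
    (hu : hgt u = (h : ℤ)) (hu' : hgt u' = (h : ℤ))
    (hm : IsMotzkinPrefix m) (hm' : IsMotzkinPrefix m')
    (heq : u ++ (Step.U :: (m ++ [Step.D])) = u' ++ (Step.U :: (m' ++ [Step.D]))) :
    u = u' ∧ m = m' := by
  have h1 := decomp_len_aux hu hu' hm heq
  have h2 := decomp_len_aux hu' hu hm' heq.symm
  have hlen : u.length = u'.length := by omega
  have huu : u = u' := by
    have p1 : u <+: u ++ (Step.U :: (m ++ [Step.D])) := u.prefix_append _
    have p2 : u' <+: u ++ (Step.U :: (m ++ [Step.D])) := by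
      rw [heq]; exact u'.prefix_append _
    rw [List.prefix_iff_eq_take.mp p1, List.prefix_iff_eq_take.mp p2, hlen]
  subst huu
  have := List.append_cancel_left heq
  injection this with _ h3
  exact ⟨rfl, List.append_cancel_right h3⟩

end PGFAux

namespace PGFAux
open Step List MvPowerSeries

def pR (h : ℕ) (w : List Step) : Prop := pP h w ∧ EW Step.D w
def pT (v : List Step) : Prop := ∃ m, pM m ∧ v = Step.U :: (m ++ [Step.D])
def pTD (v : List Step) : Prop := ∃ m, pM m ∧ v = m ++ [Step.D]

lemma countD_le {w : List Step} (hw : IsMotzkinPrefix w) :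
    w.count Step.D ≤ w.count Step.U := by
  have h1 := motzkinPrefix_nonneg hw
  have h2 := hgt_eq_counts w
  omega

lemma countD_eq {w : List Step} (h0 : hgt w = 0) :
    w.count Step.D = w.count Step.U := by
  have h2 := hgt_eq_counts w
  omega

lemma fin_pP (h : ℕ) (d : Fin 2 →₀ ℕ) : Finite {w : List Step // pP h w ∧ cts w = d} :=
  slice_finite _ 1 (fun w hw => by have := countD_le hw.1; omega) d

lemma fin_pA (h : ℕ) (d : Fin 2 →₀ ℕ) : Finite {w : List Step // pA h w ∧ cts w = d} :=
  slice_finite _ 1 (fun w hw => by have := countD_le hw.1.1; omega) d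

lemma fin_pR (h : ℕ) (d : Fin 2 →₀ ℕ) : Finite {w : List Step // pR h w ∧ cts w = d} :=
  slice_finite _ 1 (fun w hw => by have := countD_le hw.1.1; omega) d

lemma fin_pPE (h : ℕ) (s : Step) (d : Fin 2 →₀ ℕ) :
    Finite {w : List Step // (pP h w ∧ EW s w) ∧ cts w = d} :=
  slice_finite _ 1 (fun w hw => by have := countD_le hw.1.1; omega) d

lemma fin_pM (d : Fin 2 →₀ ℕ) : Finite {w : List Step // pM w ∧ cts w = d} :=
  slice_finite _ 1 (fun w hw => by have := countD_le hw.1.1; omega) d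

lemma fin_pT (d : Fin 2 →₀ ℕ) : Finite {w : List Step // pT w ∧ cts w = d} := by
  apply slice_finite _ 1 (fun w hw => ?_) d
  obtain ⟨m, hm, rfl⟩ := hw
  have := countD_eq hm.1.2
  simp [List.count_cons, List.count_append]
  omega

lemma fin_pTD (d : Fin 2 →₀ ℕ) : Finite {w : List Step // pTD w ∧ cts w = d} := by
  apply slice_finite _ 1 (fun w hw => ?_) d
  obtain ⟨m, hm, rfl⟩ := hw
  have := countD_eq hm.1.2
  simp [List.count_append]
  omega

lemma fin_single (x : List Step) (d : Fin 2 →₀ ℕ) :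
    Finite {w : List Step // w = x ∧ cts w = d} := by
  haveI : Subsingleton {w : List Step // w = x ∧ cts w = d} :=
    ⟨fun a b => Subtype.ext (a.2.1.trans b.2.1.symm)⟩
  exact Finite.of_subsingleton

/-- gf of a one-element language is a monomial;
    here specialized to the two singleton letters that get counted. -/
lemma gf_single_H : gf (fun v => v = [Step.H]) = MvPowerSeries.X (0 : Fin 2) := by
  ext d
  classical
  rw [coeff_gf, MvPowerSeries.coeff_X]
  have hcts : cts [Step.H] = Finsupp.single (0 : Fin 2) 1 := by
    apply Finsupp.ext; rw [Fin.forall_fin_two]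
    constructor <;> simp [cts_apply0, cts_apply1, Finsupp.single_apply]
  split_ifs with hd
  · haveI : Nonempty {w : List Step // w = [Step.H] ∧ cts w = d} :=
      ⟨⟨[Step.H], rfl, by rw [hcts, hd]⟩⟩
    haveI : Subsingleton {w : List Step // w = [Step.H] ∧ cts w = d} :=
      ⟨fun a b => Subtype.ext (a.2.1.trans b.2.1.symm)⟩
    rw [Nat.card_unique]; norm_num
  · haveI : IsEmpty {w : List Step // w = [Step.H] ∧ cts w = d} :=
      ⟨fun ⟨w, hw, hc⟩ => hd (by rw [← hc, hw, hcts])⟩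
    rw [Nat.card_of_isEmpty]; norm_num

lemma gf_single_U : gf (fun v => v = [Step.U]) = MvPowerSeries.X (1 : Fin 2) := by
  ext d
  classical
  rw [coeff_gf, MvPowerSeries.coeff_X]
  have hcts : cts [Step.U] = Finsupp.single (1 : Fin 2) 1 := by
    apply Finsupp.ext; rw [Fin.forall_fin_two]
    constructor <;> simp [cts_apply0, cts_apply1, Finsupp.single_apply]
  split_ifs with hd
  · haveI : Nonempty {w : List Step // w = [Step.U] ∧ cts w = d} :=
      ⟨⟨[Step.U], rfl, by rw [hcts, hd]⟩⟩
    haveI : Subsingleton {w : List Step // w = [Step.U] ∧ cts w = d} :=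
      ⟨fun a b => Subtype.ext (a.2.1.trans b.2.1.symm)⟩
    rw [Nat.card_unique]; norm_num
  · haveI : IsEmpty {w : List Step // w = [Step.U] ∧ cts w = d} :=
      ⟨fun ⟨w, hw, hc⟩ => hd (by rw [← hc, hw, hcts])⟩
    rw [Nat.card_of_isEmpty]; norm_num

lemma Pgf_eq (h : ℕ) : Pgf h = gf (pP h) := by
  funext d
  show (Nat.card _ : ℚ) = (Nat.card _ : ℚ)
  congr 1
  apply Nat.card_congr
  apply Equiv.subtypeEquivRight
  intro w
  rw [cts_eq_iff]
  unfold pP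
  tauto

lemma prefix_single {q : List Step} {s : Step} (h : q <+: [s]) : q = [] ∨ q = [s] := by
  have := List.prefix_concat_iff.mp (show q <+: [] ++ [s] by simpa using h)
  rcases this with h' | h'
  · right; simpa using h'
  · left; exact List.prefix_nil.mp h'

/-- splitting off a final H -/
lemma gfH (h : ℕ) :
    gf (fun w => pP h w ∧ EW Step.H w)
      = gf (pP h) * gf (fun v => v = [Step.H]) := by
  apply gf_mul (fin_pP h) (fin_single _)
  · intro w
    constructor
    · rintro ⟨⟨hw, hc, hh⟩, u, rfl⟩
      refine ⟨u, [Step.H], ⟨?_, ?_, ?_⟩, rfl, rfl⟩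
      · exact motzkinPrefix_mono (u.prefix_append _) hw
      · exact cornerless_concat_H.mp hc
      · rw [hgt_append, hgt_singleton] at hh
        simpa [Step.val] using hh
    · rintro ⟨u, v, ⟨hw, hc, hh⟩, rfl, rfl⟩
      have h0 : (0:ℤ) ≤ hgt u := motzkinPrefix_nonneg hw
      refine ⟨⟨?_, ?_, ?_⟩, u, rfl⟩
      · apply motzkinPrefix_append.mpr
        refine ⟨hw, fun q hq => ?_⟩
        rcases prefix_single hq with rfl | rfl
        · rw [hgt_nil, add_zero]; exact h0
        · rw [hgt_singleton]; simp [Step.val]; omega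
      · exact cornerless_concat_H.mpr hc
      · rw [hgt_append, hgt_singleton, hh]; simp [Step.val]
  · rintro u v u' v' _ rfl _ rfl heq
    exact ⟨List.append_cancel_right heq, rfl⟩

/-- splitting off a final U -/
lemma gfU (h : ℕ) :
    gf (fun w => pP (h+1) w ∧ EW Step.U w)
      = gf (pA h) * gf (fun v => v = [Step.U]) := by
  apply gf_mul (fin_pA h) (fin_single _)
  · intro w
    constructor
    · rintro ⟨⟨hw, hc, hh⟩, u, rfl⟩
      obtain ⟨hc', hD⟩ := cornerless_concat_U.mp hc
      refine ⟨u, [Step.U], ⟨⟨?_, hc', ?_⟩, hD⟩, rfl, rfl⟩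
      · exact motzkinPrefix_mono (u.prefix_append _) hw
      · rw [hgt_append, hgt_singleton] at hh
        push_cast at hh ⊢
        simp [Step.val] at hh
        omega
    · rintro ⟨u, v, ⟨⟨hw, hc, hh⟩, hD⟩, rfl, rfl⟩
      have h0 : (0:ℤ) ≤ hgt u := motzkinPrefix_nonneg hw
      refine ⟨⟨?_, ?_, ?_⟩, u, rfl⟩
      · apply motzkinPrefix_append.mpr
        refine ⟨hw, fun q hq => ?_⟩
        rcases prefix_single hq with rfl | rfl
        · rw [hgt_nil, add_zero]; exact h0
        · rw [hgt_singleton]; simp [Step.val]; omega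
      · exact cornerless_concat_U.mpr ⟨hc, hD⟩
      · rw [hgt_append, hgt_singleton, hh]
        push_cast
        simp [Step.val]
  · rintro u v u' v' _ rfl _ rfl heq
    exact ⟨List.append_cancel_right heq, rfl⟩

/-- splitting off a final U (Motzkin) D block -/
lemma gfR (h : ℕ) : gf (pR h) = gf (pA h) * gf pT := by
  apply gf_mul (fin_pA h) fin_pT
  · intro w
    constructor
    · rintro ⟨⟨hw, hc, hh⟩, hD⟩
      obtain ⟨u, m, hu, hm, rfl⟩ := exists_decomp hw hc hh hD
      exact ⟨u, _, hu, ⟨m, hm, rfl⟩, rfl⟩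
    · rintro ⟨u, v, ⟨⟨hw, hc, hh⟩, hD⟩, ⟨m, ⟨⟨hmp, hm0⟩, hmc, hmne⟩, rfl⟩, rfl⟩
      have h0 : (0:ℤ) ≤ hgt u := motzkinPrefix_nonneg hw
      have hgtv : hgt (Step.U :: (m ++ [Step.D])) = 0 := by
        rw [hgt_cons, hgt_append, hgt_singleton, hm0]
        simp [Step.val]
      constructor
      constructor
      · apply motzkinPrefix_append.mpr
        refine ⟨hw, fun q hq => ?_⟩
        rcases List.prefix_cons_iff.mp hq with rfl | ⟨q', rfl, hq'⟩
        · rw [hgt_nil, add_zero]; exact h0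
        · rcases List.prefix_concat_iff.mp hq' with rfl | hq''
          · rw [hgt_cons, hgt_append, hgt_singleton, hm0]
            simp [Step.val]
            omega
          · have := hmp q' hq''
            rw [hgt_cons]
            simp [Step.val]
            omega
      constructor
      · apply (cornerless_block hmne (motzkin_head?_ne_D hmp)
          (motzkin_getLast?_ne_U hmp hm0)).mpr
        exact ⟨hc, hmc, fun hgl => hD (EW_iff_getLast?.mpr hgl)⟩
      · rw [hgt_append, hgtv, hh]
        ring
      · exact ⟨u ++ (Step.U :: m), by simp⟩
  · rintro u v u' v' ⟨⟨hwu, -, hhu⟩, -⟩ ⟨m, ⟨⟨hmp, -⟩, -, -⟩, rfl⟩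
      ⟨⟨hwu', -, hhu'⟩, -⟩ ⟨m', ⟨⟨hmp', -⟩, -, -⟩, rfl⟩ heq
    obtain ⟨h1, h2⟩ := decomp_uniq hhu hhu' hmp hmp' heq
    exact ⟨h1, by rw [h2]⟩

lemma gfT : gf pT = gf (fun v => v = [Step.U]) * gf pTD := by
  apply gf_mul (fin_single _) fin_pTD
  · intro w
    constructor
    · rintro ⟨m, hm, rfl⟩
      exact ⟨[Step.U], m ++ [Step.D], rfl, ⟨m, hm, rfl⟩, by simp⟩
    · rintro ⟨u, v, rfl, ⟨m, hm, rfl⟩, rfl⟩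
      exact ⟨m, hm, by simp⟩
  · rintro u v u' v' rfl hv rfl hv' heq
    simp only [List.singleton_append] at heq
    injection heq with _ h2
    exact ⟨rfl, h2⟩

lemma gfTD : gf pTD = gf pM := by
  funext d
  show (Nat.card _ : ℚ) = (Nat.card _ : ℚ)
  congr 1
  apply Nat.card_congr
  symm
  apply Equiv.ofBijective (f := fun m : {m : List Step // pM m ∧ cts m = d} =>
    (⟨m.1 ++ [Step.D], ⟨m.1, m.2.1, rfl⟩, by
      rw [cts_append, m.2.2]
      have : cts [Step.D] = 0 := by
        apply Finsupp.ext; rw [Fin.forall_fin_two]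
        constructor <;> simp [cts_apply0, cts_apply1]
      rw [this, add_zero]⟩ : {v : List Step // pTD v ∧ cts v = d}))
  constructor
  · rintro ⟨m, hm⟩ ⟨m', hm'⟩ hmm
    have : m ++ [Step.D] = m' ++ [Step.D] := congrArg Subtype.val hmm
    exact Subtype.ext (List.append_cancel_right this)
  · rintro ⟨v, ⟨m, hm, rfl⟩, hcv⟩
    refine ⟨⟨m, hm, ?_⟩, Subtype.ext rfl⟩
    rw [cts_append] at hcv
    have : cts [Step.D] = 0 := by
      apply Finsupp.ext; rw [Fin.forall_fin_two]
      constructor <;> simp [cts_apply0, cts_apply1]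
    rw [this, add_zero] at hcv
    exact hcv

lemma card_pP0_zero : Nat.card {w : List Step // pP 0 w ∧ cts w = 0} = 1 := by
  haveI : Nonempty {w : List Step // pP 0 w ∧ cts w = 0} :=
    ⟨⟨[], ⟨fun p hp => by rw [List.prefix_nil.mp hp]; exact le_refl 0,
      cornerless_nil, by simp [hgt]⟩, cts_nil⟩⟩
  haveI : Subsingleton {w : List Step // pP 0 w ∧ cts w = 0} := by
    constructor
    rintro ⟨w, hw, hcw⟩ ⟨w', hw', hcw'⟩
    apply Subtype.ext
    have e1 : w = [] := cts_eq_zero_iff (countD_le hw.1) hcw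
    have e2 : w' = [] := cts_eq_zero_iff (countD_le hw'.1) hcw'
    show w = w'
    rw [e1, e2]
  exact Nat.card_unique

lemma gfM : gf pM = Pgf 0 - 1 := by
  rw [Pgf_eq]
  ext d
  classical
  rw [map_sub, coeff_gf, coeff_gf, MvPowerSeries.coeff_one]
  by_cases hd : d = 0
  · subst hd
    haveI : IsEmpty {w : List Step // pM w ∧ cts w = 0} := by
      constructor
      rintro ⟨m, ⟨⟨hmp, hm0⟩, -, hne⟩, hc⟩
      exact hne (cts_eq_zero_iff (countD_le hmp) hc)
    rw [Nat.card_of_isEmpty, card_pP0_zero]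
    norm_num
  · simp only [hd, if_false, sub_zero]
    congr 1
    apply Nat.card_congr
    apply Equiv.subtypeEquivRight
    intro w
    constructor
    · rintro ⟨⟨⟨hmp, hm0⟩, hmc, -⟩, hc⟩
      exact ⟨⟨hmp, hmc, by rw [hm0]; simp⟩, hc⟩
    · rintro ⟨⟨hmp, hmc, hh⟩, hc⟩
      refine ⟨⟨⟨hmp, by rw [hh]; simp⟩, hmc, ?_⟩, hc⟩
      rintro rfl
      rw [cts_nil] at hc
      exact hd hc.symm

lemma gfP_split (h : ℕ) : gf (pP h) = gf (pA h) + gf (pR h) := by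
  apply gf_add _ _ (fin_pA h) (fin_pR h)
  · intro w; unfold pA pR; tauto
  · intro w h1 h2; exact h1.2 h2.2

lemma gfA_split (h : ℕ) :
    gf (pA (h+1)) = gf (fun w => pP (h+1) w ∧ EW Step.H w)
      + gf (fun w => pP (h+1) w ∧ EW Step.U w) := by
  apply gf_add _ _ (fin_pPE (h+1) Step.H) (fin_pPE (h+1) Step.U)
  · intro w
    constructor
    · rintro ⟨hP, hD⟩
      have hne : w ≠ [] := by
        rintro rfl
        have := hP.2.2
        simp [hgt] at this
        omega
      rcases ew_trichotomy hne with hU | hH | hDD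
      · exact Or.inr ⟨hP, hU⟩
      · exact Or.inl ⟨hP, hH⟩
      · exact absurd hDD hD
    · rintro (⟨hP, hE⟩ | ⟨hP, hE⟩) <;>
        exact ⟨hP, fun hD => by cases EW_unique hE hD⟩
  · rintro w ⟨-, h1⟩ ⟨-, h2⟩
    cases EW_unique h1 h2

end PGFAux

namespace PGFAux
open Step List MvPowerSeries

lemma recurrence (h : ℕ) :
    Pgf (h+1) * (1 - MvPowerSeries.X (0 : Fin 2)
        - MvPowerSeries.X (0 : Fin 2) * MvPowerSeries.X (1 : Fin 2) * (Pgf 0 - 1))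
      = MvPowerSeries.X (1 : Fin 2) * Pgf h := by
  have e1 : gf (pP (h+1)) = gf (pA (h+1)) + gf (pR (h+1)) := gfP_split _
  have e2 : gf (pA (h+1)) = gf (pP (h+1)) * MvPowerSeries.X 0
      + gf (pA h) * MvPowerSeries.X 1 := by
    rw [gfA_split, gfH, gfU, gf_single_H, gf_single_U]
  have e3 : gf (pR (h+1)) = gf (pA (h+1))
      * (MvPowerSeries.X 1 * (Pgf 0 - 1)) := by
    rw [gfR, gfT, gfTD, gfM, gf_single_U]
  have e4 : gf (pR h) = gf (pA h) * (MvPowerSeries.X 1 * (Pgf 0 - 1)) := by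
    rw [gfR, gfT, gfTD, gfM, gf_single_U]
  have e5 : gf (pP h) = gf (pA h) + gf (pR h) := gfP_split _
  rw [Pgf_eq (h+1), Pgf_eq h]
  linear_combination e1 + e3
    + (1 + MvPowerSeries.X 1 * (Pgf 0 - 1)) * e2
    - MvPowerSeries.X 1 * e5 - MvPowerSeries.X 1 * e4

lemma constC : MvPowerSeries.constantCoeff
    (1 - MvPowerSeries.X (0 : Fin 2)
      - MvPowerSeries.X (0 : Fin 2) * MvPowerSeries.X (1 : Fin 2) * (Pgf 0 - 1)) = 1 := by
  simp [map_sub, map_mul, MvPowerSeries.constantCoeff_X]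

end PGFAux


/-- with `P_h` the generating function of cornerless Motzkin path
prefixes ending at height `h` and `M = P_0`, for `h ≥ 1` we have
`P_h (1 − x − xy(M−1)) = y P_{h−1}`, and consequently
`P_h = y^h M / (1 − x − xy(M−1))^h`. -/
theorem prefix_generating_functions :
    (∀ h : ℕ, 1 ≤ h →
      Pgf h * (1 - MvPowerSeries.X (0 : Fin 2)
          - MvPowerSeries.X (0 : Fin 2) * MvPowerSeries.X (1 : Fin 2) * (Pgf 0 - 1))
        = MvPowerSeries.X (1 : Fin 2) * Pgf (h - 1)) ∧
    (∀ h : ℕ,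
      Pgf h = MvPowerSeries.X (1 : Fin 2) ^ h * Pgf 0 *
        (MvPowerSeries.invOfUnit
          (1 - MvPowerSeries.X (0 : Fin 2)
            - MvPowerSeries.X (0 : Fin 2) * MvPowerSeries.X (1 : Fin 2)
              * (Pgf 0 - 1)) 1) ^ h) := by
  constructor
  · intro h hh
    obtain ⟨k, rfl⟩ : ∃ k, h = k + 1 := ⟨h - 1, by omega⟩
    simpa using PGFAux.recurrence k
  · intro h
    induction h with
    | zero => simp
    | succ k ih =>
      have hinv : (1 - MvPowerSeries.X (0 : Fin 2)
          - MvPowerSeries.X (0 : Fin 2) * MvPowerSeries.X (1 : Fin 2) * (Pgf 0 - 1)) *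
          MvPowerSeries.invOfUnit
            (1 - MvPowerSeries.X (0 : Fin 2)
              - MvPowerSeries.X (0 : Fin 2) * MvPowerSeries.X (1 : Fin 2) * (Pgf 0 - 1)) 1
            = 1 :=
        MvPowerSeries.mul_invOfUnit _ 1 (by rw [PGFAux.constC]; simp)
      have hrec := PGFAux.recurrence k
      set C := 1 - MvPowerSeries.X (0 : Fin 2)
          - MvPowerSeries.X (0 : Fin 2) * MvPowerSeries.X (1 : Fin 2) * (Pgf 0 - 1) with hC
      set I := MvPowerSeries.invOfUnit C 1 with hI
      calc Pgf (k+1) = Pgf (k+1) * (C * I) := by rw [hinv, mul_one]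
        _ = (Pgf (k+1) * C) * I := by ring
        _ = (MvPowerSeries.X (1 : Fin 2) * Pgf k) * I := by rw [hrec]
        _ = MvPowerSeries.X (1 : Fin 2) * (MvPowerSeries.X (1 : Fin 2) ^ k * Pgf 0 * I ^ k)
            * I := by rw [ih]
        _ = MvPowerSeries.X (1 : Fin 2) ^ (k+1) * Pgf 0 * I ^ (k+1) := by ring
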